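/- With ω := exp(−2πi/3), ι := i/√3, σ := exp(πi/6)/√3, a := [[ω,0],[0,ω²]], b := [[σ, conj(ι)],[ι, conj(σ)]], c := [[ι, ι],[conj(ι), conj(ι)]] (2×2 complex matrices given by rows), and ρ(x) := a x a⁻¹, the following hold: (1) a + b + c = 0; (2) M₂ = a⊗a⊗a + b⊗b⊗b + ρ(b)⊗ρ(b)⊗ρ(b) + ρ²(b)⊗ρ²(b)⊗ρ²(b) + (c⊗ρ(c)⊗ρ²(c) + ρ(c)⊗ρ²(c)⊗c + ρ²(c)⊗c⊗ρ(c)). -/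

import Mathlib

set_option linter.unusedTactic false
set_option maxHeartbeats 4000000


open scoped TensorProduct
open Matrix Complex

noncomputable section

abbrev M2 := Matrix (Fin 2) (Fin 2) ℂ
abbrev W2 := M2 ⊗[ℂ] (M2 ⊗[ℂ] M2)

/-- matrix units -/
def E (i j : Fin 2) : M2 := Matrix.single i j 1

/-- the 2×2 matrix multiplication tensor -/
def MatMul2 : W2 :=
  ∑ i : Fin 2, ∑ j : Fin 2, ∑ k : Fin 2, E i j ⊗ₜ[ℂ] (E j k ⊗ₜ[ℂ] E k i)

/-- ω = exp(-2πi/3) -/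
def ω : ℂ := Complex.exp (-(2 * Real.pi * Complex.I) / 3)

/-- ι = i/√3 -/
def ι : ℂ := Complex.I / (Real.sqrt 3 : ℂ)

/-- σ = exp(πi/6)/√3 -/
def σ : ℂ := Complex.exp (Real.pi * Complex.I / 6) / (Real.sqrt 3 : ℂ)

def a : M2 := !![ω, 0; 0, ω ^ 2]
def b : M2 := !![σ, starRingEnd ℂ ι; ι, starRingEnd ℂ σ]
def c : M2 := !![ι, ι; starRingEnd ℂ ι, starRingEnd ℂ ι]

/-- ρ(x) = a x a⁻¹ -/
def ρ (x : M2) : M2 := a * x * a⁻¹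


private def u : ℂ := (Real.sqrt 3 : ℝ)
private lemma hu2 : u ^ 2 = 3 := by
  simp only [u, ← Complex.ofReal_pow, Real.sq_sqrt (by norm_num : (3:ℝ) ≥ 0)]
  norm_num
private lemma hune : u ≠ 0 := by
  intro h
  have := hu2
  rw [h] at this
  simp at this
private lemma hu3 : u ^ 3 = (3:ℂ)*u := by rw [pow_succ, hu2]; try ring
private lemma hu4 : u ^ 4 = (9:ℂ) := by rw [show 4 = 2+2 by norm_num, pow_add, hu2]; try norm_num
private lemma hu5 : u ^ 5 = (9:ℂ)*u := by rw [show 5 = 3+2 by norm_num, pow_add, hu2, hu3]; try ring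
private lemma hu6 : u ^ 6 = (27:ℂ) := by rw [show 6 = 4+2 by norm_num, pow_add, hu2, hu4]; try ring
private lemma hu7 : u ^ 7 = (27:ℂ)*u := by rw [show 7 = 5+2 by norm_num, pow_add, hu2, hu5]; try ring
private lemma hu8 : u ^ 8 = (81:ℂ) := by rw [show 8 = 6+2 by norm_num, pow_add, hu2, hu6]; try ring
private lemma hu9 : u ^ 9 = (81:ℂ)*u := by rw [show 9 = 7+2 by norm_num, pow_add, hu2, hu7]; try ring
private lemma hu10 : u ^ 10 = (243:ℂ) := by rw [show 10 = 8+2 by norm_num, pow_add, hu2, hu8]; try ring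
private lemma hu11 : u ^ 11 = (243:ℂ)*u := by rw [show 11 = 9+2 by norm_num, pow_add, hu2, hu9]; try ring
private lemma hu12 : u ^ 12 = (729:ℂ) := by rw [show 12 = 10+2 by norm_num, pow_add, hu2, hu10]; try ring
private lemma hu13 : u ^ 13 = (729:ℂ)*u := by rw [show 13 = 11+2 by norm_num, pow_add, hu2, hu11]; try ring
private lemma hu14 : u ^ 14 = (2187:ℂ) := by rw [show 14 = 12+2 by norm_num, pow_add, hu2, hu12]; try ring
private lemma hu15 : u ^ 15 = (2187:ℂ)*u := by rw [show 15 = 13+2 by norm_num, pow_add, hu2, hu13]; try ring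
private lemma hu16 : u ^ 16 = (6561:ℂ) := by rw [show 16 = 14+2 by norm_num, pow_add, hu2, hu14]; try ring
private lemma hI2 : Complex.I ^ 2 = (-1:ℂ) := by rw [show 2 = 4*0+2 by norm_num, pow_add, pow_mul, Complex.I_pow_four]; simp [pow_succ, Complex.I_sq]
private lemma hI3 : Complex.I ^ 3 = -Complex.I := by rw [show 3 = 4*0+3 by norm_num, pow_add, pow_mul, Complex.I_pow_four]; simp [pow_succ, Complex.I_sq]
private lemma hI4 : Complex.I ^ 4 = (1:ℂ) := by rw [show 4 = 4*1+0 by norm_num, pow_add, pow_mul, Complex.I_pow_four]; simp [pow_succ, Complex.I_sq]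
private lemma hI5 : Complex.I ^ 5 = Complex.I := by rw [show 5 = 4*1+1 by norm_num, pow_add, pow_mul, Complex.I_pow_four]; simp [pow_succ, Complex.I_sq]
private lemma hI6 : Complex.I ^ 6 = (-1:ℂ) := by rw [show 6 = 4*1+2 by norm_num, pow_add, pow_mul, Complex.I_pow_four]; simp [pow_succ, Complex.I_sq]
private lemma hI7 : Complex.I ^ 7 = -Complex.I := by rw [show 7 = 4*1+3 by norm_num, pow_add, pow_mul, Complex.I_pow_four]; simp [pow_succ, Complex.I_sq]
private lemma hI8 : Complex.I ^ 8 = (1:ℂ) := by rw [show 8 = 4*2+0 by norm_num, pow_add, pow_mul, Complex.I_pow_four]; simp [pow_succ, Complex.I_sq]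
private lemma hI9 : Complex.I ^ 9 = Complex.I := by rw [show 9 = 4*2+1 by norm_num, pow_add, pow_mul, Complex.I_pow_four]; simp [pow_succ, Complex.I_sq]
private lemma hI10 : Complex.I ^ 10 = (-1:ℂ) := by rw [show 10 = 4*2+2 by norm_num, pow_add, pow_mul, Complex.I_pow_four]; simp [pow_succ, Complex.I_sq]
private lemma hI11 : Complex.I ^ 11 = -Complex.I := by rw [show 11 = 4*2+3 by norm_num, pow_add, pow_mul, Complex.I_pow_four]; simp [pow_succ, Complex.I_sq]
private lemma hI12 : Complex.I ^ 12 = (1:ℂ) := by rw [show 12 = 4*3+0 by norm_num, pow_add, pow_mul, Complex.I_pow_four]; simp [pow_succ, Complex.I_sq]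
private lemma hI13 : Complex.I ^ 13 = Complex.I := by rw [show 13 = 4*3+1 by norm_num, pow_add, pow_mul, Complex.I_pow_four]; simp [pow_succ, Complex.I_sq]
private lemma hI14 : Complex.I ^ 14 = (-1:ℂ) := by rw [show 14 = 4*3+2 by norm_num, pow_add, pow_mul, Complex.I_pow_four]; simp [pow_succ, Complex.I_sq]
private lemma hI15 : Complex.I ^ 15 = -Complex.I := by rw [show 15 = 4*3+3 by norm_num, pow_add, pow_mul, Complex.I_pow_four]; simp [pow_succ, Complex.I_sq]
private lemma hI16 : Complex.I ^ 16 = (1:ℂ) := by rw [show 16 = 4*4+0 by norm_num, pow_add, pow_mul, Complex.I_pow_four]; simp [pow_succ, Complex.I_sq]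
private lemma hωu : ω = -(1/2) - u/2 * Complex.I := by
  have h : (-(2 * (Real.pi:ℂ) * Complex.I) / 3) = ((-(2*Real.pi/3) : ℝ) : ℂ) * Complex.I := by
    push_cast; ring
  rw [ω, h, Complex.exp_mul_I, ← Complex.ofReal_cos, ← Complex.ofReal_sin]
  have h1 : Real.cos (-(2*Real.pi/3)) = -(1/2) := by
    rw [Real.cos_neg, show 2*Real.pi/3 = Real.pi - Real.pi/3 by ring, Real.cos_pi_sub,
      Real.cos_pi_div_three]
  have h2 : Real.sin (-(2*Real.pi/3)) = -(Real.sqrt 3/2) := by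
    rw [Real.sin_neg, show 2*Real.pi/3 = Real.pi - Real.pi/3 by ring, Real.sin_pi_sub,
      Real.sin_pi_div_three]
  rw [h1, h2]
  push_cast
  rw [show ((Real.sqrt 3 : ℝ) : ℂ) = u from rfl]
  ring
private lemma hιu : ι = u/3 * Complex.I := by
  rw [ι, show ((Real.sqrt 3 : ℝ):ℂ) = u from rfl]
  field_simp [hune]
  linear_combination (-1 : ℂ) * hu2
private lemma hσu : σ = 1/2 + u/6 * Complex.I := by
  have h : ((Real.pi:ℂ) * Complex.I / 6) = (((Real.pi/6) : ℝ) : ℂ) * Complex.I := by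
    push_cast; ring
  rw [σ, h, Complex.exp_mul_I, ← Complex.ofReal_cos, ← Complex.ofReal_sin,
    Real.cos_pi_div_six, Real.sin_pi_div_six, show ((Real.sqrt 3 : ℝ):ℂ) = u from rfl]
  push_cast
  rw [show ((Real.sqrt 3 : ℝ) : ℂ) = u from rfl]
  field_simp [hune]
  linear_combination (-2*Complex.I : ℂ) * hu2
private lemma hcιu : (starRingEnd ℂ) ι = -(u/3 * Complex.I) := by
  rw [hιu]
  have h : (starRingEnd ℂ) u = u := by
    rw [show u = ((Real.sqrt 3:ℝ):ℂ) from rfl, Complex.conj_ofReal]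
  simp [_root_.map_mul, map_div₀, h, Complex.conj_I, map_ofNat]
private lemma hcσu : (starRingEnd ℂ) σ = 1/2 - u/6 * Complex.I := by
  rw [hσu]
  have h : (starRingEnd ℂ) u = u := by
    rw [show u = ((Real.sqrt 3:ℝ):ℂ) from rfl, Complex.conj_ofReal]
  simp [map_add, _root_.map_mul, map_div₀, h, Complex.conj_I, map_ofNat]
  try ring
private lemma hω3 : ω ^ 3 = 1 := by
  rw [ω, ← Complex.exp_nat_mul]
  rw [show (3:ℕ) * (-(2 * (Real.pi:ℂ) * Complex.I) / 3) = -(2 * Real.pi * Complex.I) by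
    push_cast; ring]
  rw [Complex.exp_neg, Complex.exp_two_pi_mul_I]
  norm_num
private lemma hainv : a⁻¹ = !![ω^2, 0; 0, ω] := by
  apply Matrix.inv_eq_right_inv
  rw [a, Matrix.mul_fin_two]
  have h1 : ω * ω^2 = 1 := by linear_combination hω3
  have h2 : ω^2 * ω = 1 := by linear_combination hω3
  rw [h1, h2]
  norm_num
  exact Matrix.one_fin_two.symm
private lemma hρ (p q r s : ℂ) : ρ !![p,q;r,s] = !![p, ω^2*q; ω*r, s] := by
  rw [ρ, hainv, a, Matrix.mul_fin_two, Matrix.mul_fin_two]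
  ext i j
  fin_cases i <;> fin_cases j <;> simp
  · linear_combination p * hω3
  · ring
  · linear_combination (ω * r : ℂ) * hω3
  · linear_combination s * hω3
private lemma expandM (p q r s : ℂ) :
    !![p,q;r,s] = p • E 0 0 + q • E 0 1 + r • E 1 0 + s • E 1 1 := by
  ext i j
  fin_cases i <;> fin_cases j <;> simp [E, Matrix.single]

/-- The diagonalized form of the Strassen decomposition. -/
theorem strassen_diagonalized :
    a + b + c = 0 ∧
    MatMul2 =
      a ⊗ₜ[ℂ] (a ⊗ₜ[ℂ] a) + b ⊗ₜ[ℂ] (b ⊗ₜ[ℂ] b) + ρ b ⊗ₜ[ℂ] (ρ b ⊗ₜ[ℂ] ρ b) +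
        ρ (ρ b) ⊗ₜ[ℂ] (ρ (ρ b) ⊗ₜ[ℂ] ρ (ρ b)) +
        (c ⊗ₜ[ℂ] (ρ c ⊗ₜ[ℂ] ρ (ρ c)) + ρ c ⊗ₜ[ℂ] (ρ (ρ c) ⊗ₜ[ℂ] c) +
          ρ (ρ c) ⊗ₜ[ℂ] (c ⊗ₜ[ℂ] ρ c)) := by
  constructor
  · rw [a, b, c, hcσu, hcιu, hσu, hιu, hωu]
    ext i j
    fin_cases i <;> fin_cases j <;> simp
    · ring
    · linear_combination (u^2/4 : ℂ) * Complex.I_sq - (1/4 : ℂ) * hu2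
  · unfold MatMul2
    rw [b, c]
    simp only [hρ]
    rw [a]
    rw [hcσu, hcιu, hσu, hιu, hωu]
    simp only [Fin.sum_univ_two, expandM, TensorProduct.tmul_add, TensorProduct.add_tmul,
      TensorProduct.tmul_smul, ← TensorProduct.smul_tmul', smul_smul]
    match_scalars
    all_goals
      (try ring_nf;
       try simp only [hu2, hu3, hu4, hu5, hu6, hu7, hu8, hu9, hu10, hu11, hu12, hu13, hu14, hu15, hu16,
         hI2, hI3, hI4, hI5, hI6, hI7, hI8, hI9, hI10, hI11, hI12, hI13, hI14, hI15, hI16];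
       try ring_nf;
       try simp only [hu2, hu3, hu4, hu5, hu6, hu7, hu8, hu9, hu10, hu11, hu12, hu13, hu14, hu15, hu16,
         hI2, hI3, hI4, hI5, hI6, hI7, hI8, hI9, hI10, hI11, hI12, hI13, hI14, hI15, hI16];
       try ring_nf;
       try norm_num)
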